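/- arXiv:2510.22104 — 3 statements merged into one kernel-verified Lean document; each statement's English description precedes it below -/
import Mathlib

section
/- Let n, p be natural numbers, let x₀ ∈ ℝⁿ, T > 0, and let f : ℝⁿ × ℝᵖ → ℝⁿ, (x, θ) ↦ f(x, θ), be continuously differentiable. Suppose x : ℝ × ℝᵖ → ℝⁿ, (t, θ) ↦ x(t, θ), is twice continuously differentiable with ∂x/∂t (t, θ) = f(x(t, θ), θ) and x(0, θ) = x₀ for all t and θ. Fix θ₀ ∈ ℝᵖ, let L : ℝⁿ → ℝ be differentiable, and let a : ℝ → ℝⁿ be differentiable with a′(t) = − (D_x f (x(t, θ₀), θ₀))* (a(t)) for all t ∈ [0, T] and terminal condition a(T) = ∇L(x(T, θ₀)). Then for every direction δθ ∈ ℝᵖ, the derivative at θ₀ of the map θ ↦ L(x(T, θ)) in the direction δθ equals ∫₀ᵀ ⟨a(t), D_θ f (x(t, θ₀), θ₀)(δθ)⟩ dt. -/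
open scoped RealInnerProductSpace

/-- **Adjoint-based gradient formula for parameters.**
For the parametrized ODE `∂x/∂t (t,θ) = f(x(t,θ), θ)` with `x(0,θ) = x₀`,
terminal loss `L`, and adjoint state `a` solving `a′(t) = −(D_x f)* a(t)` on
`[0,T]` with `a(T) = ∇L(x(T,θ₀))`, the directional derivative at `θ₀` of
`θ ↦ L(x(T,θ))` in direction `δθ` equals `∫₀ᵀ ⟨a(t), D_θ f(x(t,θ₀),θ₀) δθ⟩ dt`. -/
theorem trase_adjoint_gradient_parameters
    (n p : ℕ) (x₀ : EuclideanSpace ℝ (Fin n)) (T : ℝ) (hT : 0 < T)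
    (f : EuclideanSpace ℝ (Fin n) × EuclideanSpace ℝ (Fin p) → EuclideanSpace ℝ (Fin n))
    (hf : ContDiff ℝ 1 f)
    (x : ℝ × EuclideanSpace ℝ (Fin p) → EuclideanSpace ℝ (Fin n))
    (hx : ContDiff ℝ 2 x)
    (hode : ∀ (t : ℝ) (θ : EuclideanSpace ℝ (Fin p)),
      deriv (fun τ => x (τ, θ)) t = f (x (t, θ), θ))
    (hinit : ∀ θ : EuclideanSpace ℝ (Fin p), x (0, θ) = x₀)
    (θ₀ : EuclideanSpace ℝ (Fin p))
    (L : EuclideanSpace ℝ (Fin n) → ℝ) (hL : Differentiable ℝ L)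
    (a : ℝ → EuclideanSpace ℝ (Fin n)) (ha : Differentiable ℝ a)
    (ha' : ∀ t ∈ Set.Icc (0 : ℝ) T,
      deriv a t
        = - (ContinuousLinearMap.adjoint
              (fderiv ℝ (fun y => f (y, θ₀)) (x (t, θ₀)))) (a t))
    (haT : a T = gradient L (x (T, θ₀))) :
    ∀ δθ : EuclideanSpace ℝ (Fin p),
      fderiv ℝ (fun θ => L (x (T, θ))) θ₀ δθ
        = ∫ t in (0 : ℝ)..T, ⟪a t, fderiv ℝ (fun θ => f (x (t, θ₀), θ)) θ₀ δθ⟫ := by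
  intro δθ
  have hx1 : ContDiff ℝ 1 x := hx.of_le one_le_two
  have xdiff : Differentiable ℝ x := hx1.differentiable one_ne_zero
  have fdiff : Differentiable ℝ f := hf.differentiable one_ne_zero
  have hF : ContDiff ℝ 1 (fderiv ℝ x) := hx.fderiv_right (by norm_num)
  have Fdiff : Differentiable ℝ (fderiv ℝ x) := hF.differentiable one_ne_zero
  -- partial θ-derivative of x
  have hxθ : ∀ t : ℝ, HasFDerivAt (fun θ' => x (t, θ'))
      ((fderiv ℝ x (t, θ₀)).comp
        (ContinuousLinearMap.inr ℝ ℝ (EuclideanSpace ℝ (Fin p)))) θ₀ :=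
    fun t => (xdiff (t, θ₀)).hasFDerivAt.comp θ₀ (hasFDerivAt_prodMk_right t θ₀)
  set v : ℝ → EuclideanSpace ℝ (Fin n) :=
    fun t => fderiv ℝ x (t, θ₀) ((0 : ℝ), δθ) with hv_def
  -- time derivative of x
  have hxt : ∀ (t : ℝ) (θ : EuclideanSpace ℝ (Fin p)),
      HasDerivAt (fun τ => x (τ, θ))
        (fderiv ℝ x (t, θ) ((1 : ℝ), (0 : EuclideanSpace ℝ (Fin p)))) t := by
    intro t θ
    have h1 : HasDerivAt (fun τ : ℝ => (τ, θ))
        ((1 : ℝ), (0 : EuclideanSpace ℝ (Fin p))) t :=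
      HasDerivAt.prodMk (hasDerivAt_id t) (hasDerivAt_const t θ)
    exact (xdiff (t, θ)).hasFDerivAt.comp_hasDerivAt t h1
  have hFf : ∀ (t : ℝ) (θ : EuclideanSpace ℝ (Fin p)),
      fderiv ℝ x (t, θ) ((1 : ℝ), (0 : EuclideanSpace ℝ (Fin p))) = f (x (t, θ), θ) := by
    intro t θ
    rw [← hode t θ, (hxt t θ).deriv]
  -- derivative of v
  have hv : ∀ t : ℝ, HasDerivAt v
      (fderiv ℝ (fderiv ℝ x) (t, θ₀) ((1 : ℝ), (0 : EuclideanSpace ℝ (Fin p)))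
        ((0 : ℝ), δθ)) t := by
    intro t
    have h1 : HasDerivAt (fun τ : ℝ => (τ, θ₀))
        ((1 : ℝ), (0 : EuclideanSpace ℝ (Fin p))) t :=
      HasDerivAt.prodMk (hasDerivAt_id t) (hasDerivAt_const t θ₀)
    have h2 : HasDerivAt (fun τ => fderiv ℝ x (τ, θ₀))
        (fderiv ℝ (fderiv ℝ x) (t, θ₀) ((1 : ℝ), (0 : EuclideanSpace ℝ (Fin p)))) t :=
      (Fdiff (t, θ₀)).hasFDerivAt.comp_hasDerivAt t h1
    have h3 := h2.clm_apply (hasDerivAt_const t ((0 : ℝ), δθ))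
    simpa using h3
  -- symmetry of second derivative
  have hsymm : ∀ t : ℝ,
      fderiv ℝ (fderiv ℝ x) (t, θ₀) ((1 : ℝ), (0 : EuclideanSpace ℝ (Fin p))) ((0 : ℝ), δθ)
        = fderiv ℝ (fderiv ℝ x) (t, θ₀) ((0 : ℝ), δθ)
            ((1 : ℝ), (0 : EuclideanSpace ℝ (Fin p))) :=
    fun t => second_derivative_symmetric (fun y => (xdiff y).hasFDerivAt)
      (Fdiff (t, θ₀)).hasFDerivAt _ _
  -- mixed derivative equals derivative of the ODE right-hand side
  have hmix : ∀ t : ℝ,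
      fderiv ℝ (fderiv ℝ x) (t, θ₀) ((0 : ℝ), δθ)
          ((1 : ℝ), (0 : EuclideanSpace ℝ (Fin p)))
        = fderiv ℝ f (x (t, θ₀), θ₀) (v t, δθ) := by
    intro t
    have h1 : HasFDerivAt (fun θ => fderiv ℝ x (t, θ))
        ((fderiv ℝ (fderiv ℝ x) (t, θ₀)).comp
          (ContinuousLinearMap.inr ℝ ℝ (EuclideanSpace ℝ (Fin p)))) θ₀ :=
      (Fdiff (t, θ₀)).hasFDerivAt.comp θ₀ (hasFDerivAt_prodMk_right t θ₀)
    have h2 := (ContinuousLinearMap.apply ℝ (EuclideanSpace ℝ (Fin n))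
        ((1 : ℝ), (0 : EuclideanSpace ℝ (Fin p)))).hasFDerivAt.comp θ₀ h1
    have h3 : HasFDerivAt (fun θ => (x (t, θ), θ))
        (((fderiv ℝ x (t, θ₀)).comp
            (ContinuousLinearMap.inr ℝ ℝ (EuclideanSpace ℝ (Fin p)))).prod
          (ContinuousLinearMap.id ℝ (EuclideanSpace ℝ (Fin p)))) θ₀ :=
      HasFDerivAt.prodMk (hxθ t) (hasFDerivAt_id θ₀)
    have h4 : HasFDerivAt (fun θ => f (x (t, θ), θ))
        ((fderiv ℝ f (x (t, θ₀), θ₀)).comp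
          (((fderiv ℝ x (t, θ₀)).comp
              (ContinuousLinearMap.inr ℝ ℝ (EuclideanSpace ℝ (Fin p)))).prod
            (ContinuousLinearMap.id ℝ (EuclideanSpace ℝ (Fin p))))) θ₀ :=
      HasFDerivAt.comp (g := f) θ₀ (fdiff (x (t, θ₀), θ₀)).hasFDerivAt h3
    have heq : (fun θ => fderiv ℝ x (t, θ) ((1 : ℝ), (0 : EuclideanSpace ℝ (Fin p))))
        = fun θ => f (x (t, θ), θ) := funext fun θ => hFf t θ
    have h2' : HasFDerivAt (fun θ => f (x (t, θ), θ))
        ((ContinuousLinearMap.apply ℝ (EuclideanSpace ℝ (Fin n))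
            ((1 : ℝ), (0 : EuclideanSpace ℝ (Fin p)))).comp
          ((fderiv ℝ (fderiv ℝ x) (t, θ₀)).comp
            (ContinuousLinearMap.inr ℝ ℝ (EuclideanSpace ℝ (Fin p))))) θ₀ := by
      rw [← heq]; exact h2
    have h5 := ContinuousLinearMap.ext_iff.1 (h2'.unique h4) δθ
    simpa using h5
  -- split the full derivative of f into partials
  have hpart1 : ∀ t : ℝ, HasFDerivAt (fun y => f (y, θ₀))
      ((fderiv ℝ f (x (t, θ₀), θ₀)).comp
        (ContinuousLinearMap.inl ℝ (EuclideanSpace ℝ (Fin n)) (EuclideanSpace ℝ (Fin p))))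
      (x (t, θ₀)) :=
    fun t => (fdiff _).hasFDerivAt.comp _ (hasFDerivAt_prodMk_left _ θ₀)
  have hpart2 : ∀ t : ℝ, HasFDerivAt (fun θ => f (x (t, θ₀), θ))
      ((fderiv ℝ f (x (t, θ₀), θ₀)).comp
        (ContinuousLinearMap.inr ℝ (EuclideanSpace ℝ (Fin n)) (EuclideanSpace ℝ (Fin p)))) θ₀ :=
    fun t => (fdiff _).hasFDerivAt.comp _ (hasFDerivAt_prodMk_right _ θ₀)
  set w : ℝ → EuclideanSpace ℝ (Fin n) :=
    fun t => fderiv ℝ (fun θ => f (x (t, θ₀), θ)) θ₀ δθ with hw_def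
  have hw_eq : ∀ t : ℝ, w t
      = fderiv ℝ f (x (t, θ₀), θ₀) ((0 : EuclideanSpace ℝ (Fin n)), δθ) := by
    intro t
    simp only [hw_def, (hpart2 t).fderiv]
    rfl
  have hsplit : ∀ t : ℝ, fderiv ℝ f (x (t, θ₀), θ₀) (v t, δθ)
      = fderiv ℝ (fun y => f (y, θ₀)) (x (t, θ₀)) (v t) + w t := by
    intro t
    rw [(hpart1 t).fderiv, hw_eq t]
    rw [show ((v t, δθ) : EuclideanSpace ℝ (Fin n) × EuclideanSpace ℝ (Fin p))
        = (v t, (0 : EuclideanSpace ℝ (Fin p)))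
          + ((0 : EuclideanSpace ℝ (Fin n)), δθ) by simp [Prod.ext_iff]]
    rw [map_add]
    rfl
  -- derivative of v, final form
  have hvd : ∀ t : ℝ, HasDerivAt v
      (fderiv ℝ (fun y => f (y, θ₀)) (x (t, θ₀)) (v t) + w t) t := by
    intro t
    have := hv t
    rw [hsymm t, hmix t, hsplit t] at this
    exact this
  -- derivative of φ
  set φ : ℝ → ℝ := fun t => ⟪a t, v t⟫ with hφ_def
  have hφ : ∀ t ∈ Set.uIcc (0 : ℝ) T, HasDerivAt φ (⟪a t, w t⟫) t := by
    intro t ht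
    rw [Set.uIcc_of_le hT.le] at ht
    have had : HasDerivAt a (deriv a t) t := (ha t).hasDerivAt
    have h1 := had.inner ℝ (hvd t)
    rw [ha' t ht] at h1
    have h2 : ⟪a t, fderiv ℝ (fun y => f (y, θ₀)) (x (t, θ₀)) (v t) + w t⟫
        + ⟪-(ContinuousLinearMap.adjoint
              (fderiv ℝ (fun y => f (y, θ₀)) (x (t, θ₀)))) (a t), v t⟫
        = ⟪a t, w t⟫ := by
      rw [inner_add_right, inner_neg_left, ContinuousLinearMap.adjoint_inner_left]
      ring
    rwa [h2] at h1
  -- integrability of the integrand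
  have hwcont : Continuous w := by
    have hc1 : Continuous fun t : ℝ => (x (t, θ₀), θ₀) :=
      (xdiff.continuous.comp (continuous_id.prodMk continuous_const)).prodMk
        continuous_const
    have hc2 : Continuous fun t : ℝ => fderiv ℝ f (x (t, θ₀), θ₀) :=
      (hf.continuous_fderiv one_ne_zero).comp hc1
    have : Continuous fun t : ℝ =>
        fderiv ℝ f (x (t, θ₀), θ₀) ((0 : EuclideanSpace ℝ (Fin n)), δθ) :=
      hc2.clm_apply continuous_const
    simpa [funext hw_eq] using this
  have hψcont : Continuous fun t => ⟪a t, w t⟫ := ha.continuous.inner hwcont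
  have key := intervalIntegral.integral_eq_sub_of_hasDerivAt hφ
    (hψcont.intervalIntegrable 0 T)
  -- v 0 = 0
  have hv0 : v 0 = 0 := by
    have h0 : HasFDerivAt (fun θ : EuclideanSpace ℝ (Fin p) => x (0, θ))
        (0 : EuclideanSpace ℝ (Fin p) →L[ℝ] EuclideanSpace ℝ (Fin n)) θ₀ := by
      have hconst : (fun θ : EuclideanSpace ℝ (Fin p) => x (0, θ)) = fun _ => x₀ :=
        funext hinit
      rw [hconst]
      exact hasFDerivAt_const x₀ θ₀
    have huniq := (hxθ 0).unique h0
    have h' := ContinuousLinearMap.ext_iff.1 huniq δθ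
    simpa [hv_def] using h'
  -- conclude
  have hLcomp : HasFDerivAt (fun θ => L (x (T, θ)))
      ((fderiv ℝ L (x (T, θ₀))).comp
        ((fderiv ℝ x (T, θ₀)).comp
          (ContinuousLinearMap.inr ℝ ℝ (EuclideanSpace ℝ (Fin p))))) θ₀ :=
    (hL _).hasFDerivAt.comp θ₀ (hxθ T)
  have hgrad : ⟪a T, v T⟫ = fderiv ℝ L (x (T, θ₀)) (v T) := by
    rw [haT]
    exact InnerProductSpace.toDual_symm_apply
  calc fderiv ℝ (fun θ => L (x (T, θ))) θ₀ δθ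
      = fderiv ℝ L (x (T, θ₀)) (v T) := by rw [hLcomp.fderiv]; rfl
    _ = ⟪a T, v T⟫ := hgrad.symm
    _ = φ T - φ 0 := by simp [hφ_def, hv0]
    _ = ∫ t in (0 : ℝ)..T, ⟪a t, w t⟫ := key.symm
end

section
/- Let n be a natural number, T > 0, and let f : ℝⁿ → ℝⁿ be continuously differentiable. Suppose x : ℝ × ℝⁿ → ℝⁿ, (t, ξ) ↦ x(t, ξ), is twice continuously differentiable with ∂x/∂t (t, ξ) = f(x(t, ξ)) and x(0, ξ) = ξ for all t and ξ. Fix ξ₀ ∈ ℝⁿ, let L : ℝⁿ → ℝ be differentiable, and let a : ℝ → ℝⁿ be differentiable with a′(t) = − (D_x f (x(t, ξ₀)))* (a(t)) for all t ∈ [0, T] and a(T) = ∇L(x(T, ξ₀)). Then for every direction δξ ∈ ℝⁿ, the derivative at ξ₀ of the map ξ ↦ L(x(T, ξ)) in the direction δξ equals ⟨a(0), δξ⟩; that is, the gradient at ξ₀ of ξ ↦ L(x(T, ξ)) equals a(0). -/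
open scoped RealInnerProductSpace

private lemma clm_apply_const_fderiv {E F G : Type*} [NormedAddCommGroup E] [NormedSpace ℝ E]
    [NormedAddCommGroup F] [NormedSpace ℝ F] [NormedAddCommGroup G] [NormedSpace ℝ G]
    {c : E → F →L[ℝ] G} {c' : E →L[ℝ] F →L[ℝ] G} {x : E} (hc : HasFDerivAt c c' x) (w : F) :
    HasFDerivAt (fun y => c y w) (c'.flip w) x := by
  simpa using hc.clm_apply (hasFDerivAt_const w x)

/-- **Adjoint-based gradient with respect to the initial condition.**
For the ODE `∂x/∂t (t,ξ) = f(x(t,ξ))` with `x(0,ξ) = ξ`, terminal loss `L`, and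
adjoint state `a` solving `a′(t) = −(D_x f)* a(t)` on `[0,T]` with
`a(T) = ∇L(x(T,ξ₀))`, the derivative at `ξ₀` of `ξ ↦ L(x(T,ξ))` in direction
`δξ` equals `⟨a(0), δξ⟩`; that is, the gradient equals `a(0)`. -/
theorem trase_adjoint_gradient_initial_condition
    (n : ℕ) (T : ℝ) (hT : 0 < T)
    (f : EuclideanSpace ℝ (Fin n) → EuclideanSpace ℝ (Fin n))
    (hf : ContDiff ℝ 1 f)
    (x : ℝ × EuclideanSpace ℝ (Fin n) → EuclideanSpace ℝ (Fin n))
    (hx : ContDiff ℝ 2 x)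
    (hode : ∀ (t : ℝ) (ξ : EuclideanSpace ℝ (Fin n)),
      deriv (fun τ => x (τ, ξ)) t = f (x (t, ξ)))
    (hinit : ∀ ξ : EuclideanSpace ℝ (Fin n), x (0, ξ) = ξ)
    (ξ₀ : EuclideanSpace ℝ (Fin n))
    (L : EuclideanSpace ℝ (Fin n) → ℝ) (hL : Differentiable ℝ L)
    (a : ℝ → EuclideanSpace ℝ (Fin n)) (ha : Differentiable ℝ a)
    (ha' : ∀ t ∈ Set.Icc (0 : ℝ) T,
      deriv a t
        = - (ContinuousLinearMap.adjoint (fderiv ℝ f (x (t, ξ₀)))) (a t))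
    (haT : a T = gradient L (x (T, ξ₀))) :
    (∀ δξ : EuclideanSpace ℝ (Fin n),
      fderiv ℝ (fun ξ => L (x (T, ξ))) ξ₀ δξ = ⟪a 0, δξ⟫)
    ∧ gradient (fun ξ => L (x (T, ξ))) ξ₀ = a 0 := by
  have hx1 : Differentiable ℝ x := hx.differentiable two_ne_zero
  have hG : ContDiff ℝ 1 (fderiv ℝ x) := hx.fderiv_right (by norm_num)
  have hGdiff : Differentiable ℝ (fderiv ℝ x) := hG.differentiable one_ne_zero
  have hslice : ∀ (ξ : EuclideanSpace ℝ (Fin n)) (t : ℝ),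
      HasDerivAt (fun τ => x (τ, ξ)) (fderiv ℝ x (t, ξ) (1, 0)) t := by
    intro ξ t
    have h1 : HasDerivAt (fun τ : ℝ => (τ, ξ)) ((1 : ℝ), (0 : EuclideanSpace ℝ (Fin n))) t :=
      (hasDerivAt_id t).prodMk (hasDerivAt_const t ξ)
    exact (hx1 (t, ξ)).hasFDerivAt.comp_hasDerivAt t h1
  have hkey : ∀ p : ℝ × EuclideanSpace ℝ (Fin n), fderiv ℝ x p (1, 0) = f (x p) := by
    intro p
    have h := (hslice p.2 p.1).deriv
    rw [← h, hode p.1 p.2]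
  -- fix a direction δξ and prove the directional statement
  have main : ∀ δξ : EuclideanSpace ℝ (Fin n),
      fderiv ℝ (fun ξ => L (x (T, ξ))) ξ₀ δξ = ⟪a 0, δξ⟫ := by
    intro δξ
    set v : ℝ → EuclideanSpace ℝ (Fin n) := fun t => fderiv ℝ x (t, ξ₀) (0, δξ) with hv
    -- derivative of v
    have hv' : ∀ t : ℝ, HasDerivAt v (fderiv ℝ f (x (t, ξ₀)) (v t)) t := by
      intro t
      have hcurve : HasDerivAt (fun τ : ℝ => (τ, ξ₀)) ((1 : ℝ), (0 : EuclideanSpace ℝ (Fin n))) t :=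
        (hasDerivAt_id t).prodMk (hasDerivAt_const t ξ₀)
      have hGp : HasFDerivAt (fderiv ℝ x) (fderiv ℝ (fderiv ℝ x) (t, ξ₀)) (t, ξ₀) :=
        (hGdiff (t, ξ₀)).hasFDerivAt
      have h1 : HasFDerivAt (fun p => fderiv ℝ x p (0, δξ))
          ((fderiv ℝ (fderiv ℝ x) (t, ξ₀)).flip (0, δξ)) (t, ξ₀) :=
        clm_apply_const_fderiv hGp (0, δξ)
      have h2 : HasDerivAt v (fderiv ℝ (fderiv ℝ x) (t, ξ₀) (1, 0) (0, δξ)) t := by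
        have := h1.comp_hasDerivAt t hcurve
        exact this
      -- symmetry of the second derivative
      have hsymm : fderiv ℝ (fderiv ℝ x) (t, ξ₀) (1, 0) (0, δξ)
          = fderiv ℝ (fderiv ℝ x) (t, ξ₀) (0, δξ) (1, 0) :=
        (hx.contDiffAt.isSymmSndFDerivAt (by simp)).eq _ _
      -- compute the RHS: derivative of p ↦ fderiv x p (1,0) = f ∘ x
      have h3 : HasFDerivAt (fun p => fderiv ℝ x p (1, 0))
          ((fderiv ℝ (fderiv ℝ x) (t, ξ₀)).flip (1, 0)) (t, ξ₀) :=
        clm_apply_const_fderiv hGp (1, 0)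
      have h4 : HasFDerivAt (fun p => f (x p))
          ((fderiv ℝ f (x (t, ξ₀))).comp (fderiv ℝ x (t, ξ₀))) (t, ξ₀) :=
        ((hf.differentiable one_ne_zero) (x (t, ξ₀))).hasFDerivAt.comp _ (hx1 (t, ξ₀)).hasFDerivAt
      have h34 : (fderiv ℝ (fderiv ℝ x) (t, ξ₀)).flip (1, 0)
          = (fderiv ℝ f (x (t, ξ₀))).comp (fderiv ℝ x (t, ξ₀)) := by
        have h3' : HasFDerivAt (fun p => f (x p))
            ((fderiv ℝ (fderiv ℝ x) (t, ξ₀)).flip (1, 0)) (t, ξ₀) := by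
          have : (fun p : ℝ × EuclideanSpace ℝ (Fin n) => fderiv ℝ x p (1, 0))
              = fun p => f (x p) := funext fun p => hkey p
          rwa [this] at h3
        exact h3'.unique h4
      have heq : fderiv ℝ (fderiv ℝ x) (t, ξ₀) (1, 0) (0, δξ)
          = fderiv ℝ f (x (t, ξ₀)) (v t) := by
        rw [hsymm]
        have := congrArg (fun (M : (ℝ × EuclideanSpace ℝ (Fin n)) →L[ℝ]
            EuclideanSpace ℝ (Fin n)) => M (0, δξ)) h34
        simpa [ContinuousLinearMap.flip_apply] using this
      rw [heq] at h2
      exact h2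
    have hvdiff : Differentiable ℝ v := fun t => (hv' t).differentiableAt
    -- g is constant on [0, T]
    set g : ℝ → ℝ := fun t => ⟪a t, v t⟫ with hg
    have hg' : ∀ t ∈ Set.Icc (0 : ℝ) T, HasDerivAt g 0 t := by
      intro t ht
      have hat : HasDerivAt a (deriv a t) t := (ha t).hasDerivAt
      have := (hat.inner ℝ (hv' t))
      rw [ha' t ht] at this
      simpa [inner_neg_left, ContinuousLinearMap.adjoint_inner_left] using this
    have hgconst : g T = g 0 := by
      have := constant_of_has_deriv_right_zero (f := g) (a := 0) (b := T)
        (fun t ht => ((ha t).inner ℝ (hvdiff t)).continuousAt.continuousWithinAt)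
        (fun t ht => ((hg' t ⟨ht.1, ht.2.le⟩).hasDerivWithinAt))
      exact this T ⟨hT.le, le_rfl⟩
    -- v 0 = δξ
    have hv0 : v 0 = δξ := by
      have hinr : HasFDerivAt (fun ξ : EuclideanSpace ℝ (Fin n) => ((0 : ℝ), ξ))
          (ContinuousLinearMap.inr ℝ ℝ (EuclideanSpace ℝ (Fin n))) ξ₀ :=
        hasFDerivAt_prodMk_right (0 : ℝ) ξ₀
      have hcomp : HasFDerivAt (fun ξ => x (0, ξ))
          ((fderiv ℝ x (0, ξ₀)).comp (ContinuousLinearMap.inr ℝ ℝ (EuclideanSpace ℝ (Fin n)))) ξ₀ :=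
        (hx1 (0, ξ₀)).hasFDerivAt.comp _ hinr
      have hid : HasFDerivAt (fun ξ : EuclideanSpace ℝ (Fin n) => x (0, ξ))
          (ContinuousLinearMap.id ℝ (EuclideanSpace ℝ (Fin n))) ξ₀ := by
        have : (fun ξ : EuclideanSpace ℝ (Fin n) => x (0, ξ)) = id := funext hinit
        rw [this]; exact hasFDerivAt_id ξ₀
      have := hcomp.unique hid
      have h := congrArg (fun (M : EuclideanSpace ℝ (Fin n) →L[ℝ] EuclideanSpace ℝ (Fin n)) =>
        M δξ) this
      simpa [v] using h
    -- chain rule at T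
    have hxi : HasFDerivAt (fun ξ => x (T, ξ))
        ((fderiv ℝ x (T, ξ₀)).comp (ContinuousLinearMap.inr ℝ ℝ (EuclideanSpace ℝ (Fin n)))) ξ₀ :=
      (hx1 (T, ξ₀)).hasFDerivAt.comp ξ₀ (hasFDerivAt_prodMk_right T ξ₀)
    have hLx : HasFDerivAt (fun ξ => L (x (T, ξ)))
        ((fderiv ℝ L (x (T, ξ₀))).comp
          ((fderiv ℝ x (T, ξ₀)).comp (ContinuousLinearMap.inr ℝ ℝ (EuclideanSpace ℝ (Fin n))))) ξ₀ :=
      (hL (x (T, ξ₀))).hasFDerivAt.comp ξ₀ hxi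
    have hgrad : ∀ w, fderiv ℝ L (x (T, ξ₀)) w = ⟪gradient L (x (T, ξ₀)), w⟫ := by
      intro w
      have hG := (hL (x (T, ξ₀))).hasGradientAt
      have := (hasGradientAt_iff_hasFDerivAt.mp hG).fderiv
      rw [this]
      simp [InnerProductSpace.toDual]
    calc fderiv ℝ (fun ξ => L (x (T, ξ))) ξ₀ δξ
        = fderiv ℝ L (x (T, ξ₀)) (v T) := by rw [hLx.fderiv]; simp [v]
      _ = ⟪gradient L (x (T, ξ₀)), v T⟫ := hgrad _
      _ = ⟪a T, v T⟫ := by rw [haT]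
      _ = ⟪a 0, v 0⟫ := hgconst
      _ = ⟪a 0, δξ⟫ := by rw [hv0]
  refine ⟨main, ?_⟩
  -- gradient statement
  have hdiff : DifferentiableAt ℝ (fun ξ => L (x (T, ξ))) ξ₀ := by
    have hxi : HasFDerivAt (fun ξ => x (T, ξ))
        ((fderiv ℝ x (T, ξ₀)).comp (ContinuousLinearMap.inr ℝ ℝ (EuclideanSpace ℝ (Fin n)))) ξ₀ :=
      (hx1 (T, ξ₀)).hasFDerivAt.comp ξ₀ (hasFDerivAt_prodMk_right T ξ₀)
    exact ((hL (x (T, ξ₀))).hasFDerivAt.comp ξ₀ hxi).differentiableAt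
  apply ext_inner_right (𝕜 := ℝ)
  intro w
  have hg2 : fderiv ℝ (fun ξ => L (x (T, ξ))) ξ₀ w
      = ⟪gradient (fun ξ => L (x (T, ξ))) ξ₀, w⟫ := by
    have hG := hdiff.hasGradientAt
    have := (hasGradientAt_iff_hasFDerivAt.mp hG).fderiv
    rw [this]
    simp [InnerProductSpace.toDual]
  rw [← hg2, main w]
end

section
/- Let n, p be natural numbers, fix u ∈ ℝ, let z₀ ∈ ℝⁿ × ℝⁿ and T > 0, and let f : ℝⁿ × ℝᵖ × ℝ → ℝⁿ be twice continuously differentiable. For each θ ∈ ℝᵖ define the augmented vector field g_θ : ℝⁿ × ℝⁿ → ℝⁿ × ℝⁿ by g_θ(x, s) = ( f(x, θ, u), ∂f/∂u (x, θ, u) + D_x f (x, θ, u)(s) ). Suppose z : ℝ × ℝᵖ → ℝⁿ × ℝⁿ, (t, θ) ↦ z(t, θ) = (x(t, θ), s(t, θ)), is twice continuously differentiable with ∂z/∂t (t, θ) = g_θ(z(t, θ)) and z(0, θ) = z₀ for all t and θ. Fix θ₀ ∈ ℝᵖ, let L : ℝⁿ × ℝⁿ → ℝ be differentiable, and let aᶻ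 : ℝ → ℝⁿ × ℝⁿ be differentiable with (aᶻ)′(t) = − (D_z g_{θ₀} (z(t, θ₀)))* (aᶻ(t)) for all t ∈ [0, T] and aᶻ(T) = ∇L(z(T, θ₀)). Then for every direction δθ ∈ ℝᵖ, the derivative at θ₀ of the map θ ↦ L(z(T, θ)) in the direction δθ equals ∫₀ᵀ ⟨aᶻ(t), ( D_θ f (x(t,θ₀), θ₀, u)(δθ), D_θ(∂f/∂u)(x(t,θ₀), θ₀, u)(δθ) + (D_θ(D_x f)(x(t,θ₀), θ₀, u)(δθ))(s(t,θ₀)) )⟩ dt. -/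
open scoped RealInnerProductSpace

theorem adjoint_aux {P Z : Type*} [NormedAddCommGroup P] [NormedSpace ℝ P]
    [NormedAddCommGroup Z] [InnerProductSpace ℝ Z] [CompleteSpace Z]
    (T : ℝ) (hT : 0 < T)
    (G : P × Z → Z) (hG : ContDiff ℝ 1 G)
    (z : ℝ × P → Z) (hz : ContDiff ℝ 2 z)
    (hode : ∀ (t : ℝ) (θ : P), deriv (fun τ => z (τ, θ)) t = G (θ, z (t, θ)))
    (z₀ : Z) (hinit : ∀ θ : P, z (0, θ) = z₀)
    (θ₀ : P) (L : Z → ℝ) (hL : Differentiable ℝ L)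
    (az : ℝ → Z) (haz : Differentiable ℝ az)
    (ha' : ∀ t ∈ Set.Icc (0:ℝ) T,
      deriv az t = - (ContinuousLinearMap.adjoint
        (fderiv ℝ (fun ζ => G (θ₀, ζ)) (z (t, θ₀)))) (az t))
    (haT : az T = gradient L (z (T, θ₀))) (δθ : P) :
    fderiv ℝ (fun θ => L (z (T, θ))) θ₀ δθ
      = ∫ t in (0:ℝ)..T, ⟪az t, fderiv ℝ (fun θ => G (θ, z (t, θ₀))) θ₀ δθ⟫ := by
  have hzd : Differentiable ℝ z := hz.differentiable two_ne_zero
  set Dz := fderiv ℝ z with hDzdef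
  have hDz : ∀ q, HasFDerivAt z (Dz q) q := fun q => (hzd q).hasFDerivAt
  have hDzC : ContDiff ℝ 1 Dz := hz.fderiv_right (by norm_num)
  set v : ℝ → Z := fun t => Dz (t, θ₀) (0, δθ) with hvdef
  -- t-derivative of z slices
  have fact1 : ∀ (t : ℝ) (θ : P), HasDerivAt (fun τ => z (τ, θ)) (Dz (t, θ) (1, 0)) t := by
    intro t θ
    exact (hDz (t, θ)).comp_hasDerivAt t ((hasDerivAt_id t).prodMk (hasDerivAt_const t θ))
  have fact2 : ∀ (t : ℝ) (θ : P), Dz (t, θ) (1, 0) = G (θ, z (t, θ)) := fun t θ =>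
    ((fact1 t θ).deriv).symm.trans (hode t θ)
  -- θ-derivative of z slices
  have fact3 : ∀ t : ℝ, HasFDerivAt (fun θ => z (t, θ))
      ((Dz (t, θ₀)).comp (ContinuousLinearMap.inr ℝ ℝ P)) θ₀ := by
    intro t
    exact (hDz (t, θ₀)).comp θ₀ (hasFDerivAt_prodMk_right t θ₀)
  have hvt : ∀ t : ℝ, v t = fderiv ℝ (fun θ => z (t, θ)) θ₀ δθ := by
    intro t; rw [(fact3 t).fderiv]; rfl
  -- second derivative
  set S : ℝ → (ℝ × P) →L[ℝ] (ℝ × P) →L[ℝ] Z := fun t => fderiv ℝ Dz (t, θ₀) with hSdef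
  have hS : ∀ t, HasFDerivAt Dz (S t) (t, θ₀) := fun t =>
    ((hDzC.differentiable one_ne_zero) (t, θ₀)).hasFDerivAt
  have fact4 : ∀ t, HasDerivAt v (S t (1, 0) (0, δθ)) t := by
    intro t
    have h1 : HasDerivAt (fun τ => Dz (τ, θ₀)) (S t (1, 0)) t :=
      (hS t).comp_hasDerivAt t ((hasDerivAt_id t).prodMk (hasDerivAt_const t θ₀))
    simpa using h1.clm_apply (hasDerivAt_const t ((0:ℝ), δθ))
  have fact5 : ∀ t, S t ((1:ℝ), (0:P)) (0, δθ) = S t (0, δθ) (1, 0) := fun t =>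
    second_derivative_symmetric hDz (hS t) _ _
  -- θ-derivative of t-derivative
  have fact6 : ∀ t, HasFDerivAt (fun θ => G (θ, z (t, θ)))
      ((((S t).comp (ContinuousLinearMap.inr ℝ ℝ P)).flip (1, 0))) θ₀ := by
    intro t
    have h1 : HasFDerivAt (fun θ => Dz (t, θ)) ((S t).comp (ContinuousLinearMap.inr ℝ ℝ P)) θ₀ :=
      (hS t).comp θ₀ (hasFDerivAt_prodMk_right t θ₀)
    have h2 := h1.clm_apply (hasFDerivAt_const ((1:ℝ), (0:P)) θ₀)
    have h3 : (fun θ => Dz (t, θ) (1, 0)) = fun θ => G (θ, z (t, θ)) := by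
      funext θ; exact fact2 t θ
    rw [h3] at h2
    simpa using h2
  -- chain rule decomposition
  set DG : ℝ → P × Z →L[ℝ] Z := fun t => fderiv ℝ G (θ₀, z (t, θ₀)) with hDGdef
  have hGd : Differentiable ℝ G := hG.differentiable one_ne_zero
  have fact7 : ∀ t, HasFDerivAt (fun θ => G (θ, z (t, θ)))
      ((DG t).comp ((ContinuousLinearMap.id ℝ P).prod
        ((Dz (t, θ₀)).comp (ContinuousLinearMap.inr ℝ ℝ P)))) θ₀ := by
    intro t
    exact (hGd (θ₀, z (t, θ₀))).hasFDerivAt.comp θ₀ ((hasFDerivAt_id θ₀).prodMk (fact3 t))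
  -- partial derivatives of G
  have fact9 : ∀ t, fderiv ℝ (fun ζ => G (θ₀, ζ)) (z (t, θ₀))
      = (DG t).comp (ContinuousLinearMap.inr ℝ P Z) := by
    intro t
    exact ((hGd (θ₀, z (t, θ₀))).hasFDerivAt.comp (z (t, θ₀))
      (hasFDerivAt_prodMk_right θ₀ (z (t, θ₀)))).fderiv
  have fact10 : ∀ t, fderiv ℝ (fun θ => G (θ, z (t, θ₀))) θ₀
      = (DG t).comp (ContinuousLinearMap.inl ℝ P Z) := by
    intro t
    exact ((hGd (θ₀, z (t, θ₀))).hasFDerivAt.comp θ₀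
      (hasFDerivAt_prodMk_left θ₀ (z (t, θ₀)))).fderiv
  set w : ℝ → Z := fun t => DG t (δθ, 0) with hwdef
  -- deriv of v equals A (v t) + w t
  have key : ∀ t, S t (1, 0) (0, δθ)
      = fderiv ℝ (fun ζ => G (θ₀, ζ)) (z (t, θ₀)) (v t) + w t := by
    intro t
    rw [fact5 t]
    have huniq := (fact6 t).unique (fact7 t)
    have h1 : S t (0, δθ) (1, 0) = DG t (δθ, v t) := by
      have := congrArg (fun (M : P →L[ℝ] Z) => M δθ) huniq
      simpa [hvdef] using this
    rw [h1, fact9 t]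
    have : (δθ, v t) = ((δθ, (0:Z)) : P × Z) + ((0:P), v t) := by simp
    rw [this, map_add]
    simp [hwdef, add_comm]
  -- the scalar function h
  set h : ℝ → ℝ := fun t => ⟪az t, v t⟫ with hhdef
  have hderiv : ∀ t ∈ Set.uIcc (0:ℝ) T, HasDerivAt h ⟪az t, w t⟫ t := by
    intro t ht
    rw [Set.uIcc_of_le hT.le] at ht
    have h1 : HasDerivAt az (deriv az t) t := (haz t).hasDerivAt
    have h2 := (HasDerivAt.inner ℝ h1 (fact4 t))
    have h3 : ⟪az t, S t (1, 0) (0, δθ)⟫ + ⟪deriv az t, v t⟫ = ⟪az t, w t⟫ := by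
      rw [key t, ha' t ht, inner_add_right]
      rw [show ∀ y : Z, (inner ℝ (-(ContinuousLinearMap.adjoint
        (fderiv ℝ (fun ζ => G (θ₀, ζ)) (z (t, θ₀)))) (az t)) y : ℝ)
        = -⟪az t, (fderiv ℝ (fun ζ => G (θ₀, ζ)) (z (t, θ₀))) y⟫ from fun y => by
          rw [inner_neg_left, ContinuousLinearMap.adjoint_inner_left]]
      ring
    rw [← h3]
    exact h2
  -- continuity of integrand
  have hcont : Continuous fun t => (⟪az t, w t⟫ : ℝ) := by
    have hzc : Continuous fun t : ℝ => z (t, θ₀) :=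
      hz.continuous.comp (continuous_id.prodMk continuous_const)
    have hDGc : Continuous DG :=
      (hG.continuous_fderiv one_ne_zero).comp (continuous_const.prodMk hzc)
    have hwc : Continuous w := hDGc.clm_apply continuous_const
    exact haz.continuous.inner hwc
  have hint : IntervalIntegrable (fun t => (⟪az t, w t⟫ : ℝ)) MeasureTheory.volume 0 T :=
    hcont.intervalIntegrable 0 T
  have hftc : ∫ t in (0:ℝ)..T, ⟪az t, w t⟫ = h T - h 0 :=
    intervalIntegral.integral_eq_sub_of_hasDerivAt hderiv hint
  -- boundary values
  have hv0 : v 0 = 0 := by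
    have hc : (fun θ : P => z (0, θ)) = fun _ => z₀ := funext hinit
    rw [hvt 0, hc, fderiv_const_apply]
    simp
  have hh0 : h 0 = 0 := by rw [hhdef]; simp [hv0]
  have hLf : fderiv ℝ (fun θ => L (z (T, θ))) θ₀ δθ = h T := by
    have h1 : HasFDerivAt (fun θ => L (z (T, θ)))
        ((fderiv ℝ L (z (T, θ₀))).comp ((Dz (T, θ₀)).comp (ContinuousLinearMap.inr ℝ ℝ P))) θ₀ :=
      (hL (z (T, θ₀))).hasFDerivAt.comp θ₀ (fact3 T)
    rw [h1.fderiv]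
    have h2 : fderiv ℝ L (z (T, θ₀)) = InnerProductSpace.toDual ℝ Z (gradient L (z (T, θ₀))) := by
      have := (hL (z (T, θ₀))).hasGradientAt
      exact this.hasFDerivAt.fderiv
    have h3 : h T = ⟪az T, Dz (T, θ₀) (0, δθ)⟫ := rfl
    show fderiv ℝ L (z (T, θ₀)) (Dz (T, θ₀) (0, δθ)) = h T
    rw [h3, h2, haT]
    exact InnerProductSpace.toDual_apply_apply
  -- conclude
  have hinteq : ∫ t in (0:ℝ)..T, ⟪az t, fderiv ℝ (fun θ => G (θ, z (t, θ₀))) θ₀ δθ⟫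
      = ∫ t in (0:ℝ)..T, ⟪az t, w t⟫ := by
    apply intervalIntegral.integral_congr
    intro t _
    show ⟪az t, fderiv ℝ (fun θ => G (θ, z (t, θ₀))) θ₀ δθ⟫ = ⟪az t, w t⟫
    rw [fact10 t]
    rfl
  rw [hLf, hinteq, hftc, hh0, sub_zero]


set_option maxHeartbeats 2000000
set_option synthInstance.maxHeartbeats 400000

/-- **Adjoint-based gradient formula for TRASE-NODEs.**
For the augmented ODE `∂z/∂t (t,θ) = g_θ(z(t,θ))` with
`g_θ(x,s) = (f(x,θ,u), ∂f/∂u(x,θ,u) + D_x f(x,θ,u) s)` on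
`ℝ²ⁿ = WithLp 2 (ℝⁿ × ℝⁿ)`, `z(0,θ) = z₀`, terminal loss `L`, and augmented
adjoint state `aᶻ` solving `(aᶻ)′(t) = −(D_z g_{θ₀})* aᶻ(t)` on `[0,T]` with
`aᶻ(T) = ∇L(z(T,θ₀))`, the directional derivative at `θ₀` of `θ ↦ L(z(T,θ))`
in direction `δθ` equals
`∫₀ᵀ ⟨aᶻ(t), (D_θ f δθ, D_θ(∂f/∂u) δθ + (D_θ(D_x f) δθ) s(t,θ₀))⟩ dt`. -/
theorem trase_augmented_adjoint_gradient
    (n p : ℕ) (u : ℝ)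
    (z₀ : WithLp 2 (EuclideanSpace ℝ (Fin n) × EuclideanSpace ℝ (Fin n)))
    (T : ℝ) (hT : 0 < T)
    (f : EuclideanSpace ℝ (Fin n) × EuclideanSpace ℝ (Fin p) × ℝ → EuclideanSpace ℝ (Fin n))
    (hf : ContDiff ℝ 2 f)
    (g : EuclideanSpace ℝ (Fin p) →
         WithLp 2 (EuclideanSpace ℝ (Fin n) × EuclideanSpace ℝ (Fin n)) →
         WithLp 2 (EuclideanSpace ℝ (Fin n) × EuclideanSpace ℝ (Fin n)))
    (hg : ∀ (θ : EuclideanSpace ℝ (Fin p)) (xx ss : EuclideanSpace ℝ (Fin n)),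
      g θ ((WithLp.equiv 2 _).symm (xx, ss))
        = (WithLp.equiv 2 _).symm (f (xx, θ, u),
            deriv (fun υ => f (xx, θ, υ)) u
              + (fderiv ℝ (fun y => f (y, θ, u)) xx) ss))
    (z : ℝ × EuclideanSpace ℝ (Fin p) →
         WithLp 2 (EuclideanSpace ℝ (Fin n) × EuclideanSpace ℝ (Fin n)))
    (hz : ContDiff ℝ 2 z)
    (x s : ℝ × EuclideanSpace ℝ (Fin p) → EuclideanSpace ℝ (Fin n))
    (hxs : ∀ (t : ℝ) (θ : EuclideanSpace ℝ (Fin p)),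
      z (t, θ) = (WithLp.equiv 2 _).symm (x (t, θ), s (t, θ)))
    (hode : ∀ (t : ℝ) (θ : EuclideanSpace ℝ (Fin p)),
      deriv (fun τ => z (τ, θ)) t = g θ (z (t, θ)))
    (hinit : ∀ θ : EuclideanSpace ℝ (Fin p), z (0, θ) = z₀)
    (θ₀ : EuclideanSpace ℝ (Fin p))
    (L : WithLp 2 (EuclideanSpace ℝ (Fin n) × EuclideanSpace ℝ (Fin n)) → ℝ)
    (hL : Differentiable ℝ L)
    (az : ℝ → WithLp 2 (EuclideanSpace ℝ (Fin n) × EuclideanSpace ℝ (Fin n)))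
    (haz : Differentiable ℝ az)
    (ha' : ∀ t ∈ Set.Icc (0 : ℝ) T,
      deriv az t
        = - (ContinuousLinearMap.adjoint (fderiv ℝ (g θ₀) (z (t, θ₀)))) (az t))
    (haT : az T = gradient L (z (T, θ₀))) :
    ∀ δθ : EuclideanSpace ℝ (Fin p),
      fderiv ℝ (fun θ => L (z (T, θ))) θ₀ δθ
        = ∫ t in (0 : ℝ)..T,
            ⟪az t, (WithLp.equiv 2 _).symm
              (fderiv ℝ (fun θ => f (x (t, θ₀), θ, u)) θ₀ δθ,
               fderiv ℝ (fun θ => deriv (fun υ => f (x (t, θ₀), θ, υ)) u) θ₀ δθ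
                 + (fderiv ℝ (fun θ => fderiv ℝ (fun y => f (y, θ, u)) (x (t, θ₀))) θ₀ δθ)
                     (s (t, θ₀)))⟫ := by
  intro δθ
  have hfd : Differentiable ℝ f := hf.differentiable two_ne_zero
  set F := fderiv ℝ f with hFdef
  have hFc : ContDiff ℝ 1 F := hf.fderiv_right (by norm_num)
  have hFd : Differentiable ℝ F := hFc.differentiable one_ne_zero
  set DF := fderiv ℝ F with hDFdef
  -- lemma A : rewrite the u-derivative via the full Frechet derivative
  have lemA : ∀ (xx : EuclideanSpace ℝ (Fin n)) (θ : EuclideanSpace ℝ (Fin p)),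
      deriv (fun υ => f (xx, θ, υ)) u = F (xx, θ, u) (0, 0, 1) := by
    intro xx θ
    exact ((hfd (xx, θ, u)).hasFDerivAt.comp_hasDerivAt u
      ((hasDerivAt_const u xx).prodMk ((hasDerivAt_const u θ).prodMk (hasDerivAt_id u)))).deriv
  -- lemma B : rewrite the x-derivative via the full Frechet derivative
  have lemB : ∀ (xx : EuclideanSpace ℝ (Fin n)) (θ : EuclideanSpace ℝ (Fin p)),
      fderiv ℝ (fun y => f (y, θ, u)) xx
        = (F (xx, θ, u)).comp (ContinuousLinearMap.inl ℝ (EuclideanSpace ℝ (Fin n))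
            (EuclideanSpace ℝ (Fin p) × ℝ)) := by
    intro xx θ
    exact ((hfd (xx, θ, u)).hasFDerivAt.comp xx (hasFDerivAt_prodMk_left xx (θ, u))).fderiv
  set e := WithLp.prodContinuousLinearEquiv 2 ℝ (EuclideanSpace ℝ (Fin n))
    (EuclideanSpace ℝ (Fin n)) with hedef
  have hesymm : ∀ y : EuclideanSpace ℝ (Fin n) × EuclideanSpace ℝ (Fin n),
      e.symm y = (WithLp.equiv 2 _).symm y := fun y => rfl
  -- explicit formula for g
  have hGform : ∀ (θ : EuclideanSpace ℝ (Fin p))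
      (ζ : WithLp 2 (EuclideanSpace ℝ (Fin n) × EuclideanSpace ℝ (Fin n))), g θ ζ
      = e.symm (f ((e ζ).1, θ, u),
          F ((e ζ).1, θ, u) (0, 0, 1) + F ((e ζ).1, θ, u) ((e ζ).2, 0, 0)) := by
    intro θ ζ
    have h0 : ζ = (WithLp.equiv 2 _).symm ((e ζ).1, (e ζ).2) := by
      rw [← hesymm]
      simp
    conv_lhs => rw [h0]
    rw [hg θ _ _, lemA, lemB, hesymm]
    rfl
  -- the joint vector field is C¹
  have hGC : ContDiff ℝ 1 (fun q : (EuclideanSpace ℝ (Fin p)) ×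
      (WithLp 2 (EuclideanSpace ℝ (Fin n) × EuclideanSpace ℝ (Fin n))) => g q.1 q.2) := by
    have hGeq : (fun q : (EuclideanSpace ℝ (Fin p)) ×
        (WithLp 2 (EuclideanSpace ℝ (Fin n) × EuclideanSpace ℝ (Fin n))) => g q.1 q.2)
        = fun q => e.symm (f ((e q.2).1, q.1, u),
            F ((e q.2).1, q.1, u) (0, 0, 1) + F ((e q.2).1, q.1, u) ((e q.2).2, 0, 0)) :=
      funext fun q => hGform q.1 q.2
    rw [hGeq]
    have hq : ContDiff ℝ 1 (fun q : (EuclideanSpace ℝ (Fin p)) ×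
        (WithLp 2 (EuclideanSpace ℝ (Fin n) × EuclideanSpace ℝ (Fin n))) =>
        ((e q.2).1, q.1, u)) :=
      (contDiff_fst.comp (e.contDiff.comp contDiff_snd)).prodMk
        (contDiff_fst.prodMk contDiff_const)
    exact e.symm.contDiff.comp (((hf.of_le one_le_two).comp hq).prodMk
      (((hFc.comp hq).clm_apply contDiff_const).add
        ((hFc.comp hq).clm_apply
          ((contDiff_snd.comp (e.contDiff.comp contDiff_snd)).prodMk contDiff_const))))
  -- apply the abstract adjoint lemma
  have main := adjoint_aux T hT (fun q => g q.1 q.2) hGC z hz hode z₀ hinit θ₀ L hL az haz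
    ha' haT δθ
  rw [main]
  apply intervalIntegral.integral_congr
  intro t _
  show (⟪az t, fderiv ℝ (fun θ => g θ (z (t, θ₀))) θ₀ δθ⟫ : ℝ)
    = ⟪az t, (WithLp.equiv 2 _).symm
        (fderiv ℝ (fun θ => f (x (t, θ₀), θ, u)) θ₀ δθ,
         fderiv ℝ (fun θ => deriv (fun υ => f (x (t, θ₀), θ, υ)) u) θ₀ δθ
           + (fderiv ℝ (fun θ => fderiv ℝ (fun y => f (y, θ, u)) (x (t, θ₀))) θ₀ δθ)
               (s (t, θ₀)))⟫
  congr 1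
  -- now a pointwise derivative computation
  have hxt : e (z (t, θ₀)) = (x (t, θ₀), s (t, θ₀)) := by
    rw [hxs t θ₀, ← hesymm]
    simp
  -- derivative of the affine insertion map
  set J : EuclideanSpace ℝ (Fin p) →L[ℝ]
      EuclideanSpace ℝ (Fin n) × EuclideanSpace ℝ (Fin p) × ℝ :=
    (0 : EuclideanSpace ℝ (Fin p) →L[ℝ] EuclideanSpace ℝ (Fin n)).prod
      ((ContinuousLinearMap.id ℝ (EuclideanSpace ℝ (Fin p))).prod
        (0 : EuclideanSpace ℝ (Fin p) →L[ℝ] ℝ)) with hJdef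
  have hJ : HasFDerivAt (fun θ : EuclideanSpace ℝ (Fin p) => (x (t, θ₀), θ, u)) J θ₀ :=
    (hasFDerivAt_const (x (t, θ₀)) θ₀).prodMk
      ((hasFDerivAt_id θ₀).prodMk (hasFDerivAt_const u θ₀))
  have p1 : HasFDerivAt (fun θ : EuclideanSpace ℝ (Fin p) => f (x (t, θ₀), θ, u))
      ((F (x (t, θ₀), θ₀, u)).comp J) θ₀ :=
    (hfd (x (t, θ₀), θ₀, u)).hasFDerivAt.comp θ₀ hJ
  have p2 : HasFDerivAt (fun θ : EuclideanSpace ℝ (Fin p) => F (x (t, θ₀), θ, u))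
      ((DF (x (t, θ₀), θ₀, u)).comp J) θ₀ :=
    (hFd (x (t, θ₀), θ₀, u)).hasFDerivAt.comp θ₀ hJ
  have hc2 := p2.clm_apply (hasFDerivAt_const
    ((0, 0, 1) : EuclideanSpace ℝ (Fin n) × EuclideanSpace ℝ (Fin p) × ℝ) θ₀)
  have hc3 := p2.clm_apply (hasFDerivAt_const
    ((s (t, θ₀), 0, 0) : EuclideanSpace ℝ (Fin n) × EuclideanSpace ℝ (Fin p) × ℝ) θ₀)
  -- value of the statement's integrand components
  have r1 : fderiv ℝ (fun θ => f (x (t, θ₀), θ, u)) θ₀ δθ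
      = F (x (t, θ₀), θ₀, u) (0, δθ, 0) := by
    rw [p1.fderiv]; simp [hJdef]
  have r2 : fderiv ℝ (fun θ => deriv (fun υ => f (x (t, θ₀), θ, υ)) u) θ₀ δθ
      = DF (x (t, θ₀), θ₀, u) (0, δθ, 0) (0, 0, 1) := by
    have heq : (fun θ : EuclideanSpace ℝ (Fin p) => deriv (fun υ => f (x (t, θ₀), θ, υ)) u)
        = fun θ => F (x (t, θ₀), θ, u) (0, 0, 1) := funext fun θ => lemA (x (t, θ₀)) θ
    rw [heq, hc2.fderiv]
    simp [hJdef]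
  have r3 : (fderiv ℝ (fun θ => fderiv ℝ (fun y => f (y, θ, u)) (x (t, θ₀))) θ₀ δθ) (s (t, θ₀))
      = DF (x (t, θ₀), θ₀, u) (0, δθ, 0) (s (t, θ₀), 0, 0) := by
    have heq : (fun θ : EuclideanSpace ℝ (Fin p) => fderiv ℝ (fun y => f (y, θ, u)) (x (t, θ₀)))
        = fun θ => (F (x (t, θ₀), θ, u)).comp (ContinuousLinearMap.inl ℝ
            (EuclideanSpace ℝ (Fin n)) (EuclideanSpace ℝ (Fin p) × ℝ)) :=
      funext fun θ => lemB (x (t, θ₀)) θ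
    rw [heq]
    set R : ((EuclideanSpace ℝ (Fin n) × EuclideanSpace ℝ (Fin p) × ℝ) →L[ℝ]
        EuclideanSpace ℝ (Fin n)) →L[ℝ]
        (EuclideanSpace ℝ (Fin n) →L[ℝ] EuclideanSpace ℝ (Fin n)) :=
      (ContinuousLinearMap.compL ℝ (EuclideanSpace ℝ (Fin n))
        (EuclideanSpace ℝ (Fin n) × EuclideanSpace ℝ (Fin p) × ℝ)
        (EuclideanSpace ℝ (Fin n))).flip
        (ContinuousLinearMap.inl ℝ (EuclideanSpace ℝ (Fin n))
          (EuclideanSpace ℝ (Fin p) × ℝ)) with hRdef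
    have hR : HasFDerivAt (fun θ : EuclideanSpace ℝ (Fin p) =>
        (F (x (t, θ₀), θ, u)).comp (ContinuousLinearMap.inl ℝ
          (EuclideanSpace ℝ (Fin n)) (EuclideanSpace ℝ (Fin p) × ℝ)))
        (R.comp ((DF (x (t, θ₀), θ₀, u)).comp J)) θ₀ := R.hasFDerivAt.comp θ₀ p2
    rw [hR.fderiv]
    simp [hRdef, hJdef]
    rfl
  -- LHS : derivative of the explicit formula
  have hfun : (fun θ => g θ (z (t, θ₀)))
      = fun θ => e.symm (f (x (t, θ₀), θ, u),
          F (x (t, θ₀), θ, u) (0, 0, 1) + F (x (t, θ₀), θ, u) (s (t, θ₀), 0, 0)) := by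
    funext θ
    rw [hGform θ (z (t, θ₀)), hxt]
  have hfull : HasFDerivAt (fun θ => g θ (z (t, θ₀)))
      ((e.symm : (EuclideanSpace ℝ (Fin n) × EuclideanSpace ℝ (Fin n)) →L[ℝ] _).comp
        (((F (x (t, θ₀), θ₀, u)).comp J).prod
          ((((F (x (t, θ₀), θ₀, u)).comp (0 : _ →L[ℝ] _)
              + ((DF (x (t, θ₀), θ₀, u)).comp J).flip (0, 0, 1)))
            + (((F (x (t, θ₀), θ₀, u)).comp (0 : _ →L[ℝ] _)
              + ((DF (x (t, θ₀), θ₀, u)).comp J).flip (s (t, θ₀), 0, 0)))))) θ₀ := by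
    rw [hfun]
    exact e.symm.hasFDerivAt.comp θ₀ (p1.prodMk (hc2.add hc3))
  rw [hfull.fderiv, r1, r2, r3, ← hesymm]
  simp [hJdef]
end
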